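/- Let G be a connected bipartite graph of order n = r + s ≥ 4 whose vertex set is partitioned into stable sets U and W with 1 ≤ |U| = r ≤ s = |W|. If G has an LD-code S such that S ∩ U ≠ ∅ and S ∩ W ≠ ∅, then λ(Ḡ) ≤ λ(G). -/
import Mathlib


open SimpleGraph

/-- `S` is a dominating set of `G`: every vertex outside `S` has a neighbor in `S`. -/
def isDomSet {α : Type*} (G : SimpleGraph α) (S : Set α) : Prop :=
  ∀ v ∉ S, ∃ u ∈ S, G.Adj v u

/-- `S` is a locating-dominating set (LD-set) of `G`. -/
def isLDSet {α : Type*} (G : SimpleGraph α) (S : Set α) : Prop :=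
  isDomSet G S ∧ ∀ u ∉ S, ∀ v ∉ S, u ≠ v →
    G.neighborSet u ∩ S ≠ G.neighborSet v ∩ S

/-- The location-domination number `λ(G)`. -/
noncomputable def ldNum {α : Type*} (G : SimpleGraph α) : ℕ :=
  sInf {n | ∃ S : Set α, isLDSet G S ∧ S.ncard = n}

/-- The global location-domination number `λ_g(G)`. -/
noncomputable def gldNum {α : Type*} (G : SimpleGraph α) : ℕ :=
  sInf {n | ∃ S : Set α, isLDSet G S ∧ isLDSet Gᶜ S ∧ S.ncard = n}

/-- `G` is bipartite with stable sets `U` and `W`. -/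
def bipartiteWith {α : Type*} (G : SimpleGraph α) (U W : Set α) : Prop :=
  U ∪ W = Set.univ ∧ Disjoint U W ∧
    ∀ ⦃u v : α⦄, G.Adj u v → (u ∈ U ∧ v ∈ W) ∨ (u ∈ W ∧ v ∈ U)

theorem stmt9 {V : Type*} [Fintype V] (G : SimpleGraph V) (U W : Set V) (r s : ℕ)
    (hconn : G.Connected) (hbip : bipartiteWith G U W)
    (hU : U.ncard = r) (hW : W.ncard = s)
    (hr1 : 1 ≤ r) (hrs : r ≤ s) (hn : 4 ≤ r + s)
    (S : Set V) (hLD : isLDSet G S) (hcode : S.ncard = ldNum G)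
    (hSU : (S ∩ U).Nonempty) (hSW : (S ∩ W).Nonempty) :
    ldNum Gᶜ ≤ ldNum G := by
  have hLDc : isLDSet Gᶜ S := by
    constructor
    · intro v hv
      have hvUW : v ∈ U ∪ W := by rw [hbip.1]; trivial
      rcases hvUW with hvU | hvW
      · obtain ⟨u, huS, huU⟩ := hSU
        refine ⟨u, huS, ?_⟩
        rw [SimpleGraph.compl_adj]
        refine ⟨fun h => hv (h ▸ huS), fun hadj => ?_⟩
        rcases hbip.2.2 hadj with ⟨_, h2⟩ | ⟨h1, _⟩
        · exact (Set.disjoint_left.mp hbip.2.1 huU) h2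
        · exact (Set.disjoint_left.mp hbip.2.1 hvU) h1
      · obtain ⟨u, huS, huW⟩ := hSW
        refine ⟨u, huS, ?_⟩
        rw [SimpleGraph.compl_adj]
        refine ⟨fun h => hv (h ▸ huS), fun hadj => ?_⟩
        rcases hbip.2.2 hadj with ⟨h1, _⟩ | ⟨_, h2⟩
        · exact (Set.disjoint_left.mp hbip.2.1 h1) hvW
        · exact (Set.disjoint_left.mp hbip.2.1 h2) huW
    · intro u hu v hv huv heq
      apply hLD.2 u hu v hv huv
      ext x
      simp only [Set.mem_inter_iff, SimpleGraph.mem_neighborSet]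
      constructor
      · rintro ⟨hadj, hxS⟩
        refine ⟨?_, hxS⟩
        have hx : x ∉ Gᶜ.neighborSet u ∩ S := by
          simp only [Set.mem_inter_iff, SimpleGraph.mem_neighborSet, SimpleGraph.compl_adj]
          tauto
        rw [heq] at hx
        simp only [Set.mem_inter_iff, SimpleGraph.mem_neighborSet, SimpleGraph.compl_adj] at hx
        by_contra hn
        exact hx ⟨⟨fun h => hv (h ▸ hxS), hn⟩, hxS⟩
      · rintro ⟨hadj, hxS⟩
        refine ⟨?_, hxS⟩
        have hx : x ∉ Gᶜ.neighborSet v ∩ S := by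
          simp only [Set.mem_inter_iff, SimpleGraph.mem_neighborSet, SimpleGraph.compl_adj]
          tauto
        rw [← heq] at hx
        simp only [Set.mem_inter_iff, SimpleGraph.mem_neighborSet, SimpleGraph.compl_adj] at hx
        by_contra hn
        exact hx ⟨⟨fun h => hu (h ▸ hxS), hn⟩, hxS⟩
  calc ldNum Gᶜ ≤ S.ncard := Nat.sInf_le ⟨S, hLDc, rfl⟩
    _ = ldNum G := hcode
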